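/- The diversity order of XP-HARQ with K transmissions equals K: if P_1 = ⋯ = P_K = γ̄·σ², then as γ̄ → ∞, −log(P_out,K)/log(γ̄) → K. -/

import Mathlib

open MeasureTheory ProbabilityTheory Real Filter

/-- The XP-HARQ outage probability after `K` rounds,
`P_out,K = Pr(∀ k, Σ_{l=1}^k log₂(1+γ_l) < Σ_{l=1}^k R_l)`, where the `γ_l` are
independent exponential random variables with rates `σ²/P_l`, realized canonically
on `Fin K → ℝ` with the product of exponential measures. -/
noncomputable def poutK (σ2 : ℝ) {K : ℕ} (P R : Fin K → ℝ) : ℝ :=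
  ((Measure.pi fun k : Fin K => expMeasure (σ2 / P k))
    {x : Fin K → ℝ | ∀ k : Fin K,
      ∑ l ∈ Finset.Iic k, Real.logb 2 (1 + x l)
        < ∑ l ∈ Finset.Iic k, R l}).toReal


open scoped ENNReal

lemma lintegral_pi_prod {n : ℕ} (μ : Fin n → Measure ℝ) [∀ i, SigmaFinite (μ i)]
    (f : Fin n → ℝ → ℝ≥0∞) (hf : ∀ i, Measurable (f i)) :
    ∫⁻ x : Fin n → ℝ, ∏ i, f i (x i) ∂Measure.pi μ = ∏ i, ∫⁻ x, f i x ∂(μ i) := by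
  induction n with
  | zero => simp [Measure.pi_of_empty μ]
  | succ n ih =>
    rw [(measurePreserving_piFinSuccAbove μ 0).symm _ |>.lintegral_map_equiv
      (fun x => ∏ i, f i (x i)) _]
    simp_rw [MeasurableEquiv.piFinSuccAbove_symm_apply, Fin.insertNthEquiv,
      Equiv.coe_fn_mk, Fin.prod_univ_succ, Fin.insertNth_zero, Fin.cons_succ,
      Fin.zero_succAbove, Fin.cons_zero, cast_eq]
    have hg : Measurable (fun b : Fin n → ℝ => ∏ i, f i.succ (b i)) :=
      Finset.measurable_prod _ fun i _ => (hf i.succ).comp (measurable_pi_apply i)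
    have key := lintegral_prod_mul (μ := μ 0) (ν := Measure.pi fun j => μ j.succ)
      (f := f 0) (g := fun b : Fin n → ℝ => ∏ i, f i.succ (b i))
      (hf 0).aemeasurable hg.aemeasurable
    rw [key, ih (fun i => μ i.succ) (fun i => f i.succ) (fun i => hf i.succ)]
lemma measurable_gammaPDF (a r : ℝ) : Measurable (gammaPDF a r) :=
  (measurable_gammaPDFReal a r).ennreal_ofReal

lemma pi_expMeasure_apply {r : ℝ} (hr : 0 < r) {K : ℕ} {E : Set (Fin K → ℝ)}
    (hE : MeasurableSet E) :
    (Measure.pi fun _ : Fin K => expMeasure r) E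
      = ∫⁻ x in E, ∏ i, gammaPDF 1 r (x i) ∂(volume : Measure (Fin K → ℝ)) := by
  haveI : IsProbabilityMeasure (expMeasure r) :=
    isProbabilityMeasure_gammaMeasure one_pos hr
  have hpi : (Measure.pi fun _ : Fin K => expMeasure r)
      = (volume : Measure (Fin K → ℝ)).withDensity (fun x => ∏ i, gammaPDF 1 r (x i)) := by
    refine Measure.pi_eq (μ := fun _ : Fin K => expMeasure r) fun s hs => ?_
    rw [withDensity_apply _ (MeasurableSet.univ_pi hs)]
    have hind : ∀ x : Fin K → ℝ,
        (Set.pi Set.univ s).indicator (fun x => ∏ i, gammaPDF 1 r (x i)) x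
          = ∏ i, (s i).indicator (gammaPDF 1 r) (x i) := by
      intro x
      by_cases hx : x ∈ Set.pi Set.univ s
      · rw [Set.indicator_of_mem hx]
        exact Finset.prod_congr rfl fun i _ =>
          (Set.indicator_of_mem (hx i (Set.mem_univ i)) _).symm
      · rw [Set.indicator_of_notMem hx]
        rw [Set.mem_pi] at hx
        push_neg at hx
        obtain ⟨i, -, hi⟩ := hx
        exact (Finset.prod_eq_zero (Finset.mem_univ i)
          (by rw [Set.indicator_of_notMem hi])).symm
    rw [← lintegral_indicator (MeasurableSet.univ_pi hs)]
    simp_rw [hind]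
    rw [volume_pi, lintegral_pi_prod _ _
      (fun i => (measurable_gammaPDF 1 r).indicator (hs i))]
    refine Finset.prod_congr rfl fun i _ => ?_
    rw [lintegral_indicator (hs i)]
    rw [expMeasure, gammaMeasure, withDensity_apply _ (hs i)]
  rw [hpi, withDensity_apply _ hE]

def outSet {K : ℕ} (R : Fin K → ℝ) : Set (Fin K → ℝ) :=
  {x | ∀ k : Fin K, ∑ l ∈ Finset.Iic k, Real.logb 2 (1 + x l)
    < ∑ l ∈ Finset.Iic k, R l}

lemma measurableSet_outSet {K : ℕ} (R : Fin K → ℝ) : MeasurableSet (outSet R) := by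
  have h : outSet R = ⋂ k : Fin K, {x : Fin K → ℝ |
      ∑ l ∈ Finset.Iic k, Real.logb 2 (1 + x l) < ∑ l ∈ Finset.Iic k, R l} := by
    ext x; simp [outSet, Set.mem_iInter, Set.mem_setOf_eq]
  rw [h]
  refine MeasurableSet.iInter fun k => ?_
  have hm : Measurable fun x : Fin K → ℝ =>
      ∑ l ∈ Finset.Iic k, Real.logb 2 (1 + x l) := by
    refine Finset.measurable_sum _ fun l _ => ?_
    simp_rw [Real.logb]
    exact (Real.measurable_log.comp (measurable_const.add (measurable_pi_apply l))).div_const _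
  exact measurableSet_lt hm measurable_const

lemma volA_facts {K : ℕ} (hK : 1 ≤ K) (R : Fin K → ℝ) (hR : ∀ k, 0 < R k) :
    (outSet R ∩ Set.pi Set.univ fun _ : Fin K => Set.Ici (0:ℝ))
      ⊆ (Set.pi Set.univ fun _ : Fin K => Set.Icc (0:ℝ) ((2:ℝ) ^ (∑ l, R l) - 1)) ∧
    0 < volume (outSet R ∩ Set.pi Set.univ fun _ : Fin K => Set.Ici (0:ℝ)) ∧
    volume (outSet R ∩ Set.pi Set.univ fun _ : Fin K => Set.Ici (0:ℝ)) < ⊤ := by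
  have hb : (1:ℝ) < 2 := one_lt_two
  have hsub : (outSet R ∩ Set.pi Set.univ fun _ : Fin K => Set.Ici (0:ℝ))
      ⊆ (Set.pi Set.univ fun _ : Fin K => Set.Icc (0:ℝ) ((2:ℝ) ^ (∑ l, R l) - 1)) := by
    rintro x ⟨hxE, hxQ⟩ i -
    have hx0 : ∀ l, (0:ℝ) ≤ x l := fun l => hxQ l (Set.mem_univ l)
    refine ⟨hx0 i, ?_⟩
    set k₀ : Fin K := ⟨K - 1, by omega⟩ with hk₀
    have hik : i ∈ Finset.Iic k₀ := by
      rw [Finset.mem_Iic, Fin.le_def]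
      have := i.isLt
      simp only [hk₀]
      omega
    have h1 : Real.logb 2 (1 + x i) ≤ ∑ l ∈ Finset.Iic k₀, Real.logb 2 (1 + x l) :=
      Finset.single_le_sum (f := fun l => Real.logb 2 (1 + x l)) (fun l _ => Real.logb_nonneg hb (by linarith [hx0 l])) hik
    have h2 := hxE k₀
    have h3 : ∑ l ∈ Finset.Iic k₀, R l ≤ ∑ l, R l :=
      Finset.sum_le_sum_of_subset_of_nonneg (Finset.subset_univ _) fun l _ _ => (hR l).le
    have h4 : Real.logb 2 (1 + x i) < ∑ l, R l := by linarith
    have h5 : 1 + x i < (2:ℝ) ^ (∑ l, R l) :=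
      (Real.logb_lt_iff_lt_rpow hb (by linarith [hx0 i])).mp h4
    linarith
  refine ⟨hsub, ?_, ?_⟩
  · have hBA : (Set.pi Set.univ fun l : Fin K => Set.Ioo (0:ℝ) ((2:ℝ) ^ (R l) - 1))
        ⊆ (outSet R ∩ Set.pi Set.univ fun _ : Fin K => Set.Ici (0:ℝ)) := by
      intro x hx
      have hxl : ∀ l, x l ∈ Set.Ioo (0:ℝ) ((2:ℝ) ^ (R l) - 1) :=
        fun l => hx l (Set.mem_univ l)
      constructor
      · intro k
        refine Finset.sum_lt_sum_of_nonempty ⟨k, Finset.mem_Iic.mpr le_rfl⟩ fun l _ => ?_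
        have h := hxl l
        exact (Real.logb_lt_iff_lt_rpow hb (by linarith [h.1])).mpr (by linarith [h.2])
      · exact fun l _ => (hxl l).1.le
    refine lt_of_lt_of_le ?_ (measure_mono hBA)
    rw [volume_pi_pi]
    rw [CanonicallyOrderedAdd.prod_pos]
    intro l _
    rw [Real.volume_Ioo]
    refine ENNReal.ofReal_pos.mpr ?_
    have : (1:ℝ) < (2:ℝ) ^ (R l) :=
      Real.one_lt_rpow_iff_of_pos (by norm_num) |>.mpr (Or.inl ⟨hb, hR l⟩)
    linarith
  · refine lt_of_le_of_lt (measure_mono hsub) ?_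
    rw [volume_pi_pi]
    exact ENNReal.prod_lt_top fun i _ => by
      rw [Real.volume_Icc]; exact ENNReal.ofReal_lt_top

lemma pout_real_bounds {K : ℕ} (hK : 1 ≤ K) (R : Fin K → ℝ) (hR : ∀ k, 0 < R k) :
    ∃ L C : ℝ, 0 < L ∧ 0 < C ∧ ∀ r : ℝ, 0 < r →
      (r * Real.exp (-(r * C)))^K * L
          ≤ ((Measure.pi fun _ : Fin K => expMeasure r) (outSet R)).toReal ∧
        ((Measure.pi fun _ : Fin K => expMeasure r) (outSet R)).toReal ≤ r^K * L := by
  obtain ⟨hsub, hpos, hfin⟩ := volA_facts hK R hR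
  set C : ℝ := (2:ℝ) ^ (∑ l, R l) - 1 with hC
  set A : Set (Fin K → ℝ) :=
    outSet R ∩ Set.pi Set.univ fun _ : Fin K => Set.Ici (0:ℝ) with hA
  have hCpos : 0 < C := by
    have : (1:ℝ) < (2:ℝ) ^ (∑ l, R l) :=
      Real.one_lt_rpow_iff_of_pos (by norm_num) |>.mpr
        (Or.inl ⟨one_lt_two, Finset.sum_pos (fun l _ => hR l)
          (by
            haveI : Nonempty (Fin K) := Fin.pos_iff_nonempty.mp (by omega)
            exact Finset.univ_nonempty)⟩)
    simp only [hC]; linarith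
  refine ⟨(volume A).toReal, C, ENNReal.toReal_pos hpos.ne' hfin.ne, hCpos, fun r hr => ?_⟩
  have hAmeas : MeasurableSet A :=
    (measurableSet_outSet R).inter (MeasurableSet.univ_pi fun _ => measurableSet_Ici)
  have hfmeas : Measurable fun x : Fin K → ℝ => ∏ i, gammaPDF 1 r (x i) :=
    Finset.measurable_prod _ fun i _ => (measurable_gammaPDF 1 r).comp (measurable_pi_apply i)
  -- the lintegral over outSet equals the lintegral over A
  have hEA : ∫⁻ x in outSet R, ∏ i, gammaPDF 1 r (x i) ∂(volume : Measure (Fin K → ℝ))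
      = ∫⁻ x in A, ∏ i, gammaPDF 1 r (x i) ∂(volume : Measure (Fin K → ℝ)) := by
    have h1 : ∀ x ∈ outSet R, (∏ i, gammaPDF 1 r (x i))
        = (Set.pi Set.univ fun _ : Fin K => Set.Ici (0:ℝ)).indicator
            (fun x => ∏ i, gammaPDF 1 r (x i)) x := by
      intro x _
      by_cases hx : x ∈ Set.pi Set.univ fun _ : Fin K => Set.Ici (0:ℝ)
      · rw [Set.indicator_of_mem hx]
      · rw [Set.indicator_of_notMem hx]
        rw [Set.mem_pi] at hx
        push_neg at hx
        obtain ⟨i, -, hi⟩ := hx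
        exact Finset.prod_eq_zero (Finset.mem_univ i)
          (gammaPDF_of_neg (by simpa [Set.mem_Ici] using hi))
    rw [setLIntegral_congr_fun_ae (measurableSet_outSet R) (ae_of_all _ h1),
      lintegral_indicator (MeasurableSet.univ_pi fun _ => measurableSet_Ici),
      Measure.restrict_restrict (MeasurableSet.univ_pi fun _ => measurableSet_Ici),
      Set.inter_comm]
  have hpdf : ∀ y : ℝ, 0 ≤ y →
      gammaPDF 1 r y = ENNReal.ofReal (r * Real.exp (-(r * y))) := by
    intro y hy
    rw [gammaPDF_of_nonneg hy]
    norm_num [Real.Gamma_one, Real.rpow_one, Real.rpow_zero]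
  -- pointwise bounds on A
  have hub : ∀ x ∈ A, (∏ i, gammaPDF 1 r (x i)) ≤ ENNReal.ofReal (r ^ K) := by
    intro x hx
    have hx' := hsub hx
    calc (∏ i, gammaPDF 1 r (x i)) ≤ ∏ _i : Fin K, ENNReal.ofReal r := by
          refine Finset.prod_le_prod' fun i _ => ?_
          rw [hpdf _ (hx' i (Set.mem_univ i)).1]
          refine ENNReal.ofReal_le_ofReal ?_
          nlinarith [Real.exp_le_one_iff.mpr
            (by nlinarith [(hx' i (Set.mem_univ i)).1] : -(r * x i) ≤ 0), hr.le,
            Real.exp_pos (-(r * x i))]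
      _ = ENNReal.ofReal (r ^ K) := by
          rw [Finset.prod_const, Finset.card_univ, Fintype.card_fin,
            ENNReal.ofReal_pow hr.le]
  have hlb : ∀ x ∈ A, ENNReal.ofReal ((r * Real.exp (-(r * C))) ^ K)
      ≤ ∏ i, gammaPDF 1 r (x i) := by
    intro x hx
    have hx' := hsub hx
    calc ENNReal.ofReal ((r * Real.exp (-(r * C))) ^ K)
        = ∏ _i : Fin K, ENNReal.ofReal (r * Real.exp (-(r * C))) := by
          rw [Finset.prod_const, Finset.card_univ, Fintype.card_fin,
            ENNReal.ofReal_pow (by positivity)]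
      _ ≤ ∏ i, gammaPDF 1 r (x i) := by
          refine Finset.prod_le_prod' fun i _ => ?_
          rw [hpdf _ (hx' i (Set.mem_univ i)).1]
          refine ENNReal.ofReal_le_ofReal ?_
          have h1 : x i ≤ C := (hx' i (Set.mem_univ i)).2
          have h2 : Real.exp (-(r * C)) ≤ Real.exp (-(r * x i)) :=
            Real.exp_le_exp.mpr (by nlinarith)
          nlinarith
  -- the two ENNReal bounds
  have hmeasure : (Measure.pi fun _ : Fin K => expMeasure r) (outSet R)
      = ∫⁻ x in A, ∏ i, gammaPDF 1 r (x i) ∂(volume : Measure (Fin K → ℝ)) := by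
    rw [pi_expMeasure_apply hr (measurableSet_outSet R), hEA]
  have hUB : (Measure.pi fun _ : Fin K => expMeasure r) (outSet R)
      ≤ ENNReal.ofReal (r ^ K) * volume A := by
    rw [hmeasure]
    calc ∫⁻ x in A, ∏ i, gammaPDF 1 r (x i) ∂(volume : Measure (Fin K → ℝ))
        ≤ ∫⁻ _x in A, ENNReal.ofReal (r ^ K) ∂(volume : Measure (Fin K → ℝ)) :=
          setLIntegral_mono measurable_const hub
      _ = ENNReal.ofReal (r ^ K) * volume A := by rw [setLIntegral_const]
  have hLB : ENNReal.ofReal ((r * Real.exp (-(r * C))) ^ K) * volume A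
      ≤ (Measure.pi fun _ : Fin K => expMeasure r) (outSet R) := by
    rw [hmeasure]
    calc ENNReal.ofReal ((r * Real.exp (-(r * C))) ^ K) * volume A
        = ∫⁻ _x in A, ENNReal.ofReal ((r * Real.exp (-(r * C))) ^ K)
            ∂(volume : Measure (Fin K → ℝ)) := by rw [setLIntegral_const]
      _ ≤ ∫⁻ x in A, ∏ i, gammaPDF 1 r (x i) ∂(volume : Measure (Fin K → ℝ)) :=
          setLIntegral_mono hfmeas hlb
  -- convert to real bounds
  constructor
  · have hfin' : (Measure.pi fun _ : Fin K => expMeasure r) (outSet R) ≠ ⊤ :=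
      (lt_of_le_of_lt hUB (ENNReal.mul_lt_top ENNReal.ofReal_lt_top hfin)).ne
    have := ENNReal.toReal_mono hfin' hLB
    rwa [ENNReal.toReal_mul, ENNReal.toReal_ofReal (by positivity)] at this
  · have hne : (ENNReal.ofReal (r ^ K) * volume A) ≠ ⊤ :=
      (ENNReal.mul_lt_top ENNReal.ofReal_lt_top hfin).ne
    have := ENNReal.toReal_mono hne hUB
    rwa [ENNReal.toReal_mul, ENNReal.toReal_ofReal (by positivity)] at this

/-- The diversity order of XP-HARQ with `K` transmissions equals `K`:
with `P₁ = ⋯ = P_K = γ̄·σ²`, as `γ̄ → ∞`, `−log(P_out,K)/log(γ̄) → K`. -/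
theorem diversity_order_K
    (K : ℕ) (hK : 1 ≤ K) (σ2 : ℝ) (hσ : 0 < σ2)
    (R : Fin K → ℝ) (hR : ∀ k, 0 < R k) :
    Filter.Tendsto
      (fun snr : ℝ =>
        - Real.log (poutK σ2 (fun _ : Fin K => snr * σ2) R) / Real.log snr)
      Filter.atTop (nhds (K : ℝ)) := by
  obtain ⟨L, C, hL, hC, hbnd⟩ := pout_real_bounds hK R hR
  have hpout : ∀ s : ℝ, 0 < s → poutK σ2 (fun _ : Fin K => s * σ2) R
      = ((Measure.pi fun _ : Fin K => expMeasure s⁻¹) (outSet R)).toReal := by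
    intro s hs
    have h2 : (fun k : Fin K => expMeasure (σ2 / ((fun _ : Fin K => s * σ2) k)))
        = fun _ : Fin K => expMeasure s⁻¹ := by
      funext k
      congr 1
      show σ2 / (s * σ2) = s⁻¹
      field_simp
    unfold poutK outSet
    rw [h2]
  -- limit of log s inverse
  have hinv : Filter.Tendsto (fun s : ℝ => (Real.log s)⁻¹) atTop (nhds 0) :=
    tendsto_inv_atTop_zero.comp Real.tendsto_log_atTop
  -- lower comparison function
  have hg1 : Filter.Tendsto (fun s : ℝ => (K : ℝ) - Real.log L * (Real.log s)⁻¹)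
      atTop (nhds (K : ℝ)) := by
    have := tendsto_const_nhds (α := ℝ) (x := (K:ℝ)) (f := atTop) |>.sub
      ((tendsto_const_nhds (x := Real.log L)).mul hinv)
    simpa using this
  -- upper comparison function
  have hg2 : Filter.Tendsto
      (fun s : ℝ => (K : ℝ) + ((K : ℝ) * C * s⁻¹ - Real.log L) * (Real.log s)⁻¹)
      atTop (nhds (K : ℝ)) := by
    have h1 : Filter.Tendsto (fun s : ℝ => (K : ℝ) * C * s⁻¹ - Real.log L)
        atTop (nhds (0 - Real.log L)) := by
      have := ((tendsto_const_nhds (f := atTop) (x := (K : ℝ) * C)).mul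
        tendsto_inv_atTop_zero).sub (tendsto_const_nhds (x := Real.log L))
      simpa using this
    have := tendsto_const_nhds (α := ℝ) (x := (K:ℝ)) (f := atTop) |>.add (h1.mul hinv)
    simpa using this
  refine tendsto_of_tendsto_of_tendsto_of_le_of_le' hg1 hg2 ?_ ?_
  · filter_upwards [eventually_gt_atTop (1 : ℝ)] with s hs1
    have hs0 : (0:ℝ) < s := lt_trans one_pos hs1
    have hlog : 0 < Real.log s := Real.log_pos hs1
    obtain ⟨hlow, hup⟩ := hbnd s⁻¹ (inv_pos.mpr hs0)
    rw [hpout s hs0]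
    set p := ((Measure.pi fun _ : Fin K => expMeasure s⁻¹) (outSet R)).toReal with hp
    have hlbpos : 0 < (s⁻¹ * Real.exp (-(s⁻¹ * C))) ^ K * L := by positivity
    have hppos : 0 < p := lt_of_lt_of_le hlbpos hlow
    have hlogp : Real.log p ≤ Real.log ((s⁻¹) ^ K * L) := Real.log_le_log hppos hup
    have hlogub : Real.log ((s⁻¹) ^ K * L) = -((K:ℝ) * Real.log s) + Real.log L := by
      rw [Real.log_mul (pow_ne_zero _ (inv_ne_zero hs0.ne')) hL.ne', Real.log_pow,
        Real.log_inv]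
      ring
    have key : (K : ℝ) * Real.log s - Real.log L ≤ -Real.log p := by
      rw [hlogub] at hlogp; linarith
    rw [le_div_iff₀ hlog]
    calc ((K : ℝ) - Real.log L * (Real.log s)⁻¹) * Real.log s
        = (K : ℝ) * Real.log s - Real.log L := by field_simp
      _ ≤ -Real.log p := key
  · filter_upwards [eventually_gt_atTop (1 : ℝ)] with s hs1
    have hs0 : (0:ℝ) < s := lt_trans one_pos hs1
    have hlog : 0 < Real.log s := Real.log_pos hs1
    obtain ⟨hlow, hup⟩ := hbnd s⁻¹ (inv_pos.mpr hs0)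
    rw [hpout s hs0]
    set p := ((Measure.pi fun _ : Fin K => expMeasure s⁻¹) (outSet R)).toReal with hp
    have hlbpos : 0 < (s⁻¹ * Real.exp (-(s⁻¹ * C))) ^ K * L := by positivity
    have hppos : 0 < p := lt_of_lt_of_le hlbpos hlow
    have hlogp : Real.log ((s⁻¹ * Real.exp (-(s⁻¹ * C))) ^ K * L) ≤ Real.log p :=
      Real.log_le_log hlbpos hlow
    have hloglb : Real.log ((s⁻¹ * Real.exp (-(s⁻¹ * C))) ^ K * L)
        = (K : ℝ) * (-Real.log s + -(s⁻¹ * C)) + Real.log L := by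
      rw [Real.log_mul (pow_ne_zero _ (mul_pos (inv_pos.mpr hs0) (Real.exp_pos _)).ne')
        hL.ne', Real.log_pow,
        Real.log_mul (inv_ne_zero hs0.ne') (Real.exp_pos _).ne', Real.log_exp,
        Real.log_inv]
    have key : -Real.log p ≤ (K : ℝ) * Real.log s + (K : ℝ) * (s⁻¹ * C) - Real.log L := by
      rw [hloglb] at hlogp; linarith
    rw [div_le_iff₀ hlog]
    calc -Real.log p ≤ (K : ℝ) * Real.log s + (K : ℝ) * (s⁻¹ * C) - Real.log L := key
      _ = ((K : ℝ) + ((K : ℝ) * C * s⁻¹ - Real.log L) * (Real.log s)⁻¹) * Real.log s := by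
          field_simp
          ring
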